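/- Let α>0, t>0 and e^{−2πα}·t < s < t, and let c ∈ ℝ. Then every connected component of the open set C_{α,s,t} ∩ {(x₁,x₂) : x₁ < c} is a bounded subset of ℝ², and likewise every connected component of C_{α,s,t} ∩ {(x₁,x₂) : x₁ > c} is bounded. -/

import Mathlib

open Complex Metric Set Filter Topology

/-- The base domain `C_{α,s,t}`: in polar coordinates, `s·e^{αφ} < r < t·e^{αφ}`. -/
def setC (α s t : ℝ) : Set (ℝ × ℝ) :=
  {x | ∃ r φ : ℝ, s * Real.exp (α * φ) < r ∧ r < t * Real.exp (α * φ) ∧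
       x = (r * Real.cos φ, r * Real.sin φ)}

noncomputable section

namespace SpiralAux

/-- The oblique strip in the `w = log z` plane. -/
def strip (α s t : ℝ) : Set ℂ :=
  {w : ℂ | Real.log s < w.re - α * w.im ∧ w.re - α * w.im < Real.log t}

lemma isOpen_strip (α s t : ℝ) : IsOpen (strip α s t) := by
  have h : strip α s t = (fun w : ℂ => w.re - α * w.im) ⁻¹' Set.Ioo (Real.log s) (Real.log t) := by
    ext w; simp [strip, Set.mem_Ioo]
  rw [h]
  exact isOpen_Ioo.preimage (Complex.continuous_re.sub (continuous_const.mul Complex.continuous_im))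

/-- The branch index used by the inverse of `exp` on the strip. -/
def sinvN (α t : ℝ) (z : ℂ) : ℤ :=
  ⌊(Real.log (‖z‖) - α * Complex.arg z - Real.log t) / (2 * Real.pi * α)⌋ + 1

/-- Inverse of `exp` on the strip. -/
def sinv (α t : ℝ) (z : ℂ) : ℂ :=
  Complex.log z + ((2 * Real.pi * (sinvN α t z : ℝ) : ℝ) : ℂ) * Complex.I

lemma sinv_re (α t : ℝ) (z : ℂ) : (sinv α t z).re = Real.log (‖z‖) := by
  simp [sinv, Complex.log_re]

lemma sinv_im (α t : ℝ) (z : ℂ) :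
    (sinv α t z).im = Complex.arg z + 2 * Real.pi * (sinvN α t z : ℝ) := by
  simp [sinv, Complex.log_im]

lemma sinv_exp {α s t : ℝ} (hα : 0 < α) (hs : 0 < s)
    (hlt : Real.log t - Real.log s < 2 * Real.pi * α) {w : ℂ} (hw : w ∈ strip α s t) :
    sinv α t (Complex.exp w) = w := by
  have h2πα : (0:ℝ) < 2 * Real.pi * α := by positivity
  set z := Complex.exp w with hz
  have habs : ‖z‖ = Real.exp w.re := Complex.norm_exp w
  have hlogabs : Real.log (‖z‖) = w.re := by rw [habs, Real.log_exp]
  -- exp (w.re + arg z * I) = exp w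
  have hz2 : Complex.exp ((w.re : ℂ) + (Complex.arg z : ℂ) * Complex.I) = Complex.exp w := by
    rw [Complex.exp_add, ← Complex.ofReal_exp, ← habs, Complex.norm_mul_exp_arg_mul_I]
  obtain ⟨j, hj⟩ := Complex.exp_eq_exp_iff_exists_int.mp hz2
  rw [Complex.ext_iff] at hj
  obtain ⟨-, him0⟩ := hj
  simp only [Complex.add_im, Complex.ofReal_im, Complex.mul_im, Complex.ofReal_re,
    Complex.I_im, Complex.I_re, Complex.intCast_im, Complex.intCast_re, Complex.mul_re,
    Complex.re_ofNat, Complex.im_ofNat, mul_zero, mul_one, zero_mul, add_zero, zero_add,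
    sub_zero] at him0
  -- him0 : z.arg = w.im + j * (2π) (roughly)
  have him : w.im = Complex.arg z + 2 * Real.pi * ((-j : ℤ) : ℝ) := by
    push_cast
    nlinarith [him0]
  have hn : sinvN α t z = -j := by
    set q : ℝ := (Real.log (‖z‖) - α * Complex.arg z - Real.log t) / (2 * Real.pi * α)
      with hq
    have hqval : q * (2 * Real.pi * α) = w.re - α * Complex.arg z - Real.log t := by
      rw [hq, hlogabs, div_mul_cancel₀ _ h2πα.ne']
    have hw1 : Real.log s < w.re - α * w.im := hw.1
    have hw2 : w.re - α * w.im < Real.log t := hw.2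
    rw [him] at hw1 hw2
    have key1 : q < ((-j : ℤ) : ℝ) := by nlinarith [hqval, hw2, h2πα]
    have key2 : ((-j : ℤ) : ℝ) < q + 1 := by nlinarith [hqval, hw1, h2πα, hlt]
    have h1 : ⌊q⌋ < -j := Int.floor_lt.mpr key1
    have h2 : -j - 1 ≤ ⌊q⌋ := Int.le_floor.mpr (by push_cast at key2 ⊢; linarith)
    show ⌊(Real.log (‖z‖) - α * Complex.arg z - Real.log t) / (2 * Real.pi * α)⌋ + 1
        = -j
    rw [← hq]
    omega
  apply Complex.ext
  · rw [sinv_re, hlogabs]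
  · rw [sinv_im, hn, him]

/-- `exp` as a partial equivalence from the strip onto its image. -/
def stripEquiv (α s t : ℝ) (hα : 0 < α) (hs : 0 < s)
    (hlt : Real.log t - Real.log s < 2 * Real.pi * α) : PartialEquiv ℂ ℂ where
  toFun := Complex.exp
  invFun := sinv α t
  source := strip α s t
  target := Complex.exp '' strip α s t
  map_source' := fun w hw => Set.mem_image_of_mem _ hw
  map_target' := by
    rintro z ⟨w, hw, rfl⟩
    rw [sinv_exp hα hs hlt hw]; exact hw
  left_inv' := fun w hw => sinv_exp hα hs hlt hw
  right_inv' := by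
    rintro z ⟨w, hw, rfl⟩
    rw [sinv_exp hα hs hlt hw]

/-- `exp` as a partial homeomorphism from the strip onto its image. -/
def stripHomeo (α s t : ℝ) (hα : 0 < α) (hs : 0 < s)
    (hlt : Real.log t - Real.log s < 2 * Real.pi * α) : PartialHomeomorph ℂ ℂ :=
  PartialHomeomorph.ofContinuousOpen (stripEquiv α s t hα hs hlt)
    Complex.continuous_exp.continuousOn Complex.isOpenMap_exp (isOpen_strip α s t)

lemma continuousOn_sinv (α s t : ℝ) (hα : 0 < α) (hs : 0 < s)
    (hlt : Real.log t - Real.log s < 2 * Real.pi * α) :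
    ContinuousOn (sinv α t) (Complex.exp '' strip α s t) :=
  (stripHomeo α s t hα hs hlt).continuousOn_symm

/-- Key bounding lemma: a preconnected subset of `exp '' strip ∩ P` which cannot cross the
barrier angle `θ` and starts below it stays below it, hence is norm-bounded. -/
lemma bound (α s t : ℝ) (hα : 0 < α) (hs : 0 < s) (ht : 0 < t)
    (hlt : Real.log t - Real.log s < 2 * Real.pi * α)
    (P : Set ℂ) (K : Set ℂ) (hK : IsPreconnected K)
    (hsub : K ⊆ Complex.exp '' strip α s t) (hsubP : K ⊆ P) (θ : ℝ)
    (hbar : ∀ w ∈ strip α s t, w.im = θ → Complex.exp w ∉ P)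
    (z₀ : ℂ) (hz₀ : z₀ ∈ K) (hz₀θ : (sinv α t z₀).im < θ) :
    ∀ z ∈ K, ‖z‖ < t * Real.exp (α * θ) := by
  have hcont : ContinuousOn (fun z => (sinv α t z).im) K :=
    (Complex.continuous_im.comp_continuousOn
      ((continuousOn_sinv α s t hα hs hlt).mono hsub))
  have hne : ∀ z ∈ K, (sinv α t z).im ≠ θ := by
    intro z hz hth
    obtain ⟨w, hw, rfl⟩ := hsub hz
    rw [sinv_exp hα hs hlt hw] at hth
    exact hbar w hw hth (hsubP hz)
  have hall : ∀ z ∈ K, (sinv α t z).im < θ := by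
    intro z hz
    rcases lt_or_ge ((sinv α t z).im) θ with h | h
    · exact h
    · exfalso
      have hIcc := hK.intermediate_value hz₀ hz hcont
      have : θ ∈ (fun z => (sinv α t z).im) '' K :=
        hIcc ⟨le_of_lt hz₀θ, h⟩
      obtain ⟨z', hz', hz'θ⟩ := this
      exact hne z' hz' hz'θ
  intro z hz
  obtain ⟨w, hw, rfl⟩ := hsub hz
  have hwim : w.im < θ := by
    have := hall _ hz
    rwa [sinv_exp hα hs hlt hw] at this
  have h1 : ‖Complex.exp w‖ = Real.exp w.re := Complex.norm_exp w
  have h2 : w.re < Real.log t + α * θ := by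
    have := hw.2
    nlinarith [hwim, hα]
  calc ‖Complex.exp w‖ = Real.exp w.re := h1
    _ < Real.exp (Real.log t + α * θ) := Real.exp_lt_exp.mpr h2
    _ = t * Real.exp (α * θ) := by rw [Real.exp_add, Real.exp_log ht]

/-- Membership in `setC` corresponds to membership in `exp '' strip`. -/
lemma mem_setC_iff (α s t : ℝ) (hs : 0 < s) (ht : 0 < t) (p : ℝ × ℝ) :
    p ∈ setC α s t ↔ ((p.1 : ℂ) + (p.2 : ℂ) * Complex.I) ∈ Complex.exp '' strip α s t := by
  constructor
  · rintro ⟨r, φ, h1, h2, hp⟩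
    have hr : 0 < r := lt_trans (by positivity) h1
    refine ⟨⟨Real.log r, φ⟩, ⟨?_, ?_⟩, ?_⟩
    · show Real.log s < Real.log r - α * φ
      have := Real.log_lt_log (by positivity) h1
      rw [Real.log_mul hs.ne' (Real.exp_pos _).ne', Real.log_exp] at this
      linarith
    · show Real.log r - α * φ < Real.log t
      have := Real.log_lt_log hr h2
      rw [Real.log_mul ht.ne' (Real.exp_pos _).ne', Real.log_exp] at this
      linarith
    · rw [Complex.ext_iff, hp]
      constructor
      · simp [Complex.exp_re, Real.exp_log hr, Complex.cos_ofReal_re]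
      · simp [Complex.exp_im, Real.exp_log hr, Complex.sin_ofReal_re]
  · rintro ⟨w, hw, hwp⟩
    refine ⟨Real.exp w.re, w.im, ?_, ?_, ?_⟩
    · have : Real.log s + α * w.im < w.re := by linarith [hw.1]
      have := Real.exp_lt_exp.mpr this
      rwa [Real.exp_add, Real.exp_log hs] at this
    · have : w.re < Real.log t + α * w.im := by linarith [hw.2]
      have := Real.exp_lt_exp.mpr this
      rwa [Real.exp_add, Real.exp_log ht] at this
    · have h1 : p.1 = (Complex.exp w).re := by rw [hwp]; simp
      have h2 : p.2 = (Complex.exp w).im := by rw [hwp]; simp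
      rw [Prod.ext_iff]
      exact ⟨by rw [h1, Complex.exp_re], by rw [h2, Complex.exp_im]⟩

/-- A connected component of `setC ∩ Q` is bounded, provided the half-plane condition `Q`
(matching `P` on the complex side) fails on the whole barrier angle `θ`. -/
lemma half_bounded (α s t : ℝ) (hα : 0 < α) (hs : 0 < s) (ht : 0 < t)
    (hlt : Real.log t - Real.log s < 2 * Real.pi * α)
    (Q : Set (ℝ × ℝ)) (P : Set ℂ)
    (hQP : ∀ p : ℝ × ℝ, p ∈ Q ↔ ((p.1 : ℂ) + (p.2 : ℂ) * Complex.I) ∈ P)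
    (θ : ℝ) (hbar : ∀ w ∈ strip α s t, w.im = θ → Complex.exp w ∉ P)
    (x : ℝ × ℝ) (hx : x ∈ setC α s t ∩ Q)
    (hxθ : (sinv α t ((x.1 : ℂ) + (x.2 : ℝ) * Complex.I)).im < θ) :
    Bornology.IsBounded (connectedComponentIn (setC α s t ∩ Q) x) := by
  set U := setC α s t ∩ Q with hU
  set K0 := connectedComponentIn U x with hK0def
  have hK0 : IsPreconnected K0 :=
    (isConnected_connectedComponentIn_iff.mpr hx).isPreconnected
  set m : ℝ × ℝ → ℂ := fun p => (p.1 : ℂ) + (p.2 : ℂ) * Complex.I with hm'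
  have hm : Continuous m := by
    apply Continuous.add
    · exact Complex.continuous_ofReal.comp continuous_fst
    · exact ((Complex.continuous_ofReal.comp continuous_snd).mul continuous_const)
  have hKpre : IsPreconnected (m '' K0) := hK0.image m hm.continuousOn
  have hsubU : K0 ⊆ U := connectedComponentIn_subset U x
  have hsub : m '' K0 ⊆ Complex.exp '' strip α s t := by
    rintro _ ⟨p, hp, rfl⟩
    exact (mem_setC_iff α s t hs ht p).mp (hsubU hp).1
  have hsubP : m '' K0 ⊆ P := by
    rintro _ ⟨p, hp, rfl⟩
    exact (hQP p).mp (hsubU hp).2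
  have hb := bound α s t hα hs ht hlt P (m '' K0) hKpre hsub hsubP θ hbar
    (m x) (Set.mem_image_of_mem m (mem_connectedComponentIn hx)) hxθ
  have hnorm : ∀ y : ℝ × ℝ, ‖y‖ ≤ ‖m y‖ := by
    intro y
    rw [Prod.norm_def, max_le_iff, Real.norm_eq_abs, Real.norm_eq_abs]
    have h1 : (m y).re = y.1 := by simp [hm']
    have h2 : (m y).im = y.2 := by simp [hm']
    exact ⟨h1 ▸ Complex.abs_re_le_norm (m y), h2 ▸ Complex.abs_im_le_norm (m y)⟩
  have : K0 ⊆ closedBall 0 (t * Real.exp (α * θ)) := by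
    intro y hy
    rw [mem_closedBall_zero_iff]
    exact le_of_lt (lt_of_le_of_lt (hnorm y) (hb (m y) (Set.mem_image_of_mem m hy)))
  exact (isBounded_closedBall).subset this

end SpiralAux

end

/-- Every connected component of `C_{α,s,t} ∩ {x₁ < c}`, and of `C_{α,s,t} ∩ {x₁ > c}`,
is a bounded subset of `ℝ²`. -/
theorem setC_halves_components_bounded (α s t : ℝ) (hα : 0 < α) (ht : 0 < t)
    (hst : Real.exp (-(2 * Real.pi * α)) * t < s) (hst' : s < t) (c : ℝ) :
    (∀ x ∈ setC α s t ∩ {x : ℝ × ℝ | x.1 < c},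
      Bornology.IsBounded
        (connectedComponentIn (setC α s t ∩ {x : ℝ × ℝ | x.1 < c}) x)) ∧
    (∀ x ∈ setC α s t ∩ {x : ℝ × ℝ | c < x.1},
      Bornology.IsBounded
        (connectedComponentIn (setC α s t ∩ {x : ℝ × ℝ | c < x.1}) x)) := by
  have hs : 0 < s := lt_trans (by positivity) hst
  have hlt : Real.log t - Real.log s < 2 * Real.pi * α := by
    have h := Real.log_lt_log (by positivity) hst
    rw [Real.log_mul (Real.exp_ne_zero _) ht.ne', Real.log_exp] at h
    linarith
  constructor <;> intro x hx
  · -- left half-plane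
    obtain ⟨k, hk⟩ := exists_nat_gt
      (max ((SpiralAux.sinv α t ((x.1 : ℂ) + (x.2 : ℝ) * Complex.I)).im / (2 * Real.pi))
        (Real.log ((|c| + 1) / s) / (2 * Real.pi * α)))
    set θ : ℝ := (k : ℝ) * (2 * Real.pi) with hθ
    have hβθ : (SpiralAux.sinv α t ((x.1 : ℂ) + (x.2 : ℝ) * Complex.I)).im < θ := by
      have := lt_of_le_of_lt (le_max_left _ _) hk
      rwa [div_lt_iff₀ Real.two_pi_pos] at this
    have hgrow : |c| + 1 < s * Real.exp (α * θ) := by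
      have h1 := lt_of_le_of_lt (le_max_right _ _) hk
      rw [div_lt_iff₀ (by positivity)] at h1
      have h2 : (|c| + 1) / s < Real.exp ((k : ℝ) * (2 * Real.pi * α)) := by
        rw [← Real.exp_log (show (0:ℝ) < (|c| + 1) / s by positivity)]
        exact Real.exp_lt_exp.mpr h1
      have h3 : α * θ = (k : ℝ) * (2 * Real.pi * α) := by rw [hθ]; ring
      rw [h3, div_lt_iff₀ hs] at *
      nlinarith [h2]
    have hbar : ∀ w ∈ SpiralAux.strip α s t, w.im = θ →
        Complex.exp w ∉ {z : ℂ | z.re < c} := by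
      intro w hw him hP
      have hcos : Real.cos θ = 1 := Real.cos_nat_mul_two_pi k
      have hre : (Complex.exp w).re = Real.exp w.re := by
        rw [Complex.exp_re, him, hcos, mul_one]
      have hwre : Real.log s + α * θ < w.re := by
        have := hw.1; rw [him] at this; linarith
      have hlow : s * Real.exp (α * θ) < Real.exp w.re := by
        rw [← Real.exp_log hs, ← Real.exp_add]
        exact Real.exp_lt_exp.mpr hwre
      have : (Complex.exp w).re < c := hP
      have hca : c ≤ |c| := le_abs_self c
      rw [hre] at this
      linarith
    exact SpiralAux.half_bounded α s t hα hs ht hlt _ {z : ℂ | z.re < c}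
      (fun p => by simp) θ hbar x hx hβθ
  · -- right half-plane
    obtain ⟨k, hk⟩ := exists_nat_gt
      (max ((SpiralAux.sinv α t ((x.1 : ℂ) + (x.2 : ℝ) * Complex.I)).im / (2 * Real.pi))
        (Real.log ((|c| + 1) / s) / (2 * Real.pi * α)))
    set θ : ℝ := (k : ℝ) * (2 * Real.pi) + Real.pi with hθ
    have hβθ : (SpiralAux.sinv α t ((x.1 : ℂ) + (x.2 : ℝ) * Complex.I)).im < θ := by
      have := lt_of_le_of_lt (le_max_left _ _) hk
      rw [div_lt_iff₀ Real.two_pi_pos] at this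
      have := Real.pi_pos
      rw [hθ]; linarith
    have hgrow : |c| + 1 < s * Real.exp (α * θ) := by
      have h1 := lt_of_le_of_lt (le_max_right _ _) hk
      rw [div_lt_iff₀ (by positivity)] at h1
      have h2 : (|c| + 1) / s < Real.exp ((k : ℝ) * (2 * Real.pi * α)) := by
        rw [← Real.exp_log (show (0:ℝ) < (|c| + 1) / s by positivity)]
        exact Real.exp_lt_exp.mpr h1
      have h4 : Real.exp ((k : ℝ) * (2 * Real.pi * α)) ≤ Real.exp (α * θ) := by
        apply Real.exp_le_exp.mpr
        rw [hθ]
        have := Real.pi_pos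
        nlinarith
      rw [div_lt_iff₀ hs] at h2
      nlinarith [h2, h4, Real.exp_pos ((k : ℝ) * (2 * Real.pi * α))]
    have hbar : ∀ w ∈ SpiralAux.strip α s t, w.im = θ →
        Complex.exp w ∉ {z : ℂ | c < z.re} := by
      intro w hw him hP
      have hcos : Real.cos θ = -1 := by
        rw [hθ, Real.cos_add_pi, Real.cos_nat_mul_two_pi]
      have hre : (Complex.exp w).re = -Real.exp w.re := by
        rw [Complex.exp_re, him, hcos]; ring
      have hwre : Real.log s + α * θ < w.re := by
        have := hw.1; rw [him] at this; linarith
      have hlow : s * Real.exp (α * θ) < Real.exp w.re := by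
        rw [← Real.exp_log hs, ← Real.exp_add]
        exact Real.exp_lt_exp.mpr hwre
      have hPP : c < (Complex.exp w).re := hP
      have hca : -|c| ≤ c := neg_abs_le c
      rw [hre] at hPP
      linarith
    exact SpiralAux.half_bounded α s t hα hs ht hlt _ {z : ℂ | c < z.re}
      (fun p => by simp) θ hbar x hx hβθ
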